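/- Let n ∈ ℕ and let B, C, X, Z be n×n complex matrices such that X² + B·X + C = 0, Z² + B·Z + C = 0, and X − Z is invertible. Then for every λ ∈ ℂ such that λ·1 − X and λ·1 − Z are both invertible, the matrix λ²·1 + λ·B + C is invertible and (λ²·1 + λ·B + C)⁻¹ = ((λ·1 − X)⁻¹ − (λ·1 − Z)⁻¹)·(X − Z)⁻¹. -/

import Mathlib

/-- If `X`, `Z` form a complete pair of right solvents, then for every `λ` with
`λ·1 − X` and `λ·1 − Z` invertible, `λ²·1 + λ·B + C` is invertible and
`(λ²·1 + λ·B + C)⁻¹ = ((λ·1 − X)⁻¹ − (λ·1 − Z)⁻¹)·(X − Z)⁻¹`. -/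
theorem pencil_inv_of_complete_pair (n : ℕ) (B C X Z : Matrix (Fin n) (Fin n) ℂ)
    (hX : X ^ 2 + B * X + C = 0) (hZ : Z ^ 2 + B * Z + C = 0) (hXZ : IsUnit (X - Z)) :
    ∀ lam : ℂ,
      IsUnit (lam • (1 : Matrix (Fin n) (Fin n) ℂ) - X) →
      IsUnit (lam • (1 : Matrix (Fin n) (Fin n) ℂ) - Z) →
      IsUnit ((lam ^ 2) • (1 : Matrix (Fin n) (Fin n) ℂ) + lam • B + C) ∧
      ((lam ^ 2) • (1 : Matrix (Fin n) (Fin n) ℂ) + lam • B + C)⁻¹ =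
        ((lam • (1 : Matrix (Fin n) (Fin n) ℂ) - X)⁻¹ -
          (lam • (1 : Matrix (Fin n) (Fin n) ℂ) - Z)⁻¹) * (X - Z)⁻¹ := by
  intro lam hA hAz
  set I : Matrix (Fin n) (Fin n) ℂ := 1
  set L : Matrix (Fin n) (Fin n) ℂ := (lam ^ 2) • I + lam • B + C with hLdef
  set A : Matrix (Fin n) (Fin n) ℂ := lam • I - X with hAdef
  set Az : Matrix (Fin n) (Fin n) ℂ := lam • I - Z with hAzdef
  have hCX : C = -(X ^ 2 + B * X) := by
    linear_combination (norm := noncomm_ring) hX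
  have hCZ : C = -(Z ^ 2 + B * Z) := by
    linear_combination (norm := noncomm_ring) hZ
  have hfacX : L = (lam • I + B + X) * A := by
    rw [hLdef, hAdef, hCX]
    simp only [I, mul_sub, add_mul, smul_mul_assoc, Matrix.mul_smul, Matrix.smul_mul,
      one_mul, mul_one, smul_smul, ← pow_two]
    noncomm_ring
    simp only [smul_smul]
    abel
  have hfacZ : L = (lam • I + B + Z) * Az := by
    rw [hLdef, hAzdef, hCZ]
    simp only [I, mul_sub, add_mul, smul_mul_assoc, Matrix.mul_smul, Matrix.smul_mul,
      one_mul, mul_one, smul_smul, ← pow_two]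
    noncomm_ring
    simp only [smul_smul]
    abel
  have hAinv : A * A⁻¹ = 1 := Matrix.mul_nonsing_inv A ((Matrix.isUnit_iff_isUnit_det A).mp hA)
  have hAzinv : Az * Az⁻¹ = 1 :=
    Matrix.mul_nonsing_inv Az ((Matrix.isUnit_iff_isUnit_det Az).mp hAz)
  have hXZinv : (X - Z) * (X - Z)⁻¹ = 1 :=
    Matrix.mul_nonsing_inv _ ((Matrix.isUnit_iff_isUnit_det _).mp hXZ)
  have hkey : L * ((A⁻¹ - Az⁻¹) * (X - Z)⁻¹) = 1 := by
    have h1 : L * A⁻¹ = lam • I + B + X := by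
      rw [hfacX, mul_assoc, hAinv, mul_one]
    have h2 : L * Az⁻¹ = lam • I + B + Z := by
      rw [hfacZ, mul_assoc, hAzinv, mul_one]
    have h3 : L * (A⁻¹ - Az⁻¹) = X - Z := by
      rw [mul_sub, h1, h2]; abel
    rw [← mul_assoc, h3, hXZinv]
  have hUnit : IsUnit L := by
    rw [Matrix.isUnit_iff_isUnit_det]
    have : L.det * ((A⁻¹ - Az⁻¹) * (X - Z)⁻¹).det = 1 := by
      rw [← Matrix.det_mul, hkey, Matrix.det_one]
    exact IsUnit.of_mul_eq_one _ this
  exact ⟨hUnit, Matrix.inv_eq_right_inv hkey⟩
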